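/- Let p be an odd prime. A nontrivial cyclic p-group is not η-capable: there is no finite p-group P with P/η(P) cyclic and nontrivial. -/

import Mathlib

/-- The subgroup generated by `p`-th powers of elements of `N`. -/
def pPow {G : Type*} [Group G] (p : ℕ) (N : Subgroup G) : Subgroup G :=
  Subgroup.closure ((fun x => x ^ p) '' (N : Set G))

theorem pPow_normal {G : Type*} [Group G] (p : ℕ) {N : Subgroup G} (hN : N.Normal) :
    (pPow p N).Normal := by
  constructor
  intro x hx g
  have h : pPow p N ≤ Subgroup.comap (MulAut.conj g).toMonoidHom (pPow p N) := by
    rw [pPow, Subgroup.closure_le]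
    rintro - ⟨n, hn, rfl⟩
    have : (MulAut.conj g) (n ^ p) = (g * n * g⁻¹) ^ p := by
      simp [MulAut.conj_apply, conj_pow]
    refine Subgroup.mem_comap.2 ?_
    show (MulAut.conj g) (n ^ p) ∈ _
    rw [this]
    exact Subgroup.subset_closure ⟨g * n * g⁻¹, hN.conj_mem n hn g, rfl⟩
  simpa using h hx

theorem normal_sSup {G : Type*} [Group G] {S : Set (Subgroup G)}
    (hS : ∀ N ∈ S, N.Normal) : (sSup S).Normal := by
  constructor
  intro x hx g
  have h : sSup S ≤ Subgroup.comap (MulAut.conj g).toMonoidHom (sSup S) := by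
    refine sSup_le fun N hN => le_trans ?_ (Subgroup.comap_mono (le_sSup hN))
    intro n hn
    exact Subgroup.mem_comap.2 (by simpa using (hS N hN).conj_mem n hn g)
  simpa using h hx

/-- The upper η-series: `η₀ = 1`, and `η_{i+1}/η_i = η(G/η_i)` is the product of all
powerfully embedded subgroups of `G/η_i`. -/
def etaUp (p : ℕ) (G : Type*) [Group G] : ℕ → Subgroup G
  | 0 => ⊥
  | i + 1 => sSup {N : Subgroup G | N.Normal ∧ ⁅N, (⊤ : Subgroup G)⁆ ≤ pPow p N ⊔ etaUp p G i}

instance etaUp_normal (p : ℕ) (G : Type*) [Group G] (i : ℕ) : (etaUp p G i).Normal := by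
  cases i with
  | zero => show (⊥ : Subgroup G).Normal; infer_instance
  | succ i => exact normal_sSup fun N hN => hN.1

/-- The powerful class of `G`. -/
noncomputable def pwc (p : ℕ) (G : Type*) [Group G] : ℕ := sInf {k | etaUp p G k = ⊤}

/-- Iterated commutator `[N, G, G, ..., G]` with `i` copies of `G`. -/
def itComm {G : Type*} [Group G] (N : Subgroup G) : ℕ → Subgroup G
  | 0 => N
  | i + 1 => ⁅itComm N i, (⊤ : Subgroup G)⁆

/-- `N` is PF-embedded in `G`: it admits a potent filtration. -/
def PFEmbedded {G : Type*} [Group G] (p : ℕ) (N : Subgroup G) : Prop :=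
  ∃ (s : ℕ) (M : ℕ → Subgroup G), M 0 = N ∧ M s = ⊥ ∧
    (∀ i, M (i + 1) ≤ M i) ∧ (∀ i, (M i).Normal) ∧
    (∀ i, ⁅M i, (⊤ : Subgroup G)⁆ ≤ M (i + 1)) ∧
    (∀ i, itComm (M i) (p - 1) ≤ pPow p (M (i + 1)))

open scoped commutatorElement

lemma pPow_mono {G : Type*} [Group G] (p : ℕ) {N M : Subgroup G} (h : N ≤ M) :
    pPow p N ≤ pPow p M :=
  Subgroup.closure_mono (Set.image_mono h)

lemma commutator_sSup_le {G : Type*} [Group G] {S : Set (Subgroup G)} {L : Subgroup G}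
    (hL : L.Normal) (h : ∀ N ∈ S, ⁅N, (⊤ : Subgroup G)⁆ ≤ L) :
    ⁅sSup S, (⊤ : Subgroup G)⁆ ≤ L := by
  let T : Subgroup G :=
  { carrier := {h | ∀ g : G, ⁅h, g⁆ ∈ L},
    one_mem' := fun g => by simpa using L.one_mem
    mul_mem' := by
      intro a b ha hb g
      have : ⁅a * b, g⁆ = (a * ⁅b, g⁆ * a⁻¹) * ⁅a, g⁆ := by
        simp only [commutatorElement_def]; group
      rw [this]
      exact L.mul_mem (hL.conj_mem _ (hb g) a) (ha g)
    inv_mem' := by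
      intro a ha g
      have : ⁅a⁻¹, g⁆ = a⁻¹ * ⁅a, g⁆⁻¹ * a⁻¹⁻¹ := by
        simp only [commutatorElement_def]; group
      rw [this]
      exact hL.conj_mem _ (L.inv_mem (ha g)) a⁻¹ }
  have hT : sSup S ≤ T := by
    refine sSup_le fun N hN => fun n hn g => ?_
    exact h N hN (Subgroup.commutator_mem_commutator hn (Subgroup.mem_top g))
  exact Subgroup.commutator_le.mpr fun a ha b _ => hT ha b

/-- a nontrivial cyclic group is not η-capable: there is no finite `p`-group `P`
with `P/η(P)` cyclic and nontrivial. -/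
theorem cyclic_not_eta_capable {p : ℕ} (hp : p.Prime) (hodd : Odd p)
    {P : Type*} [Group P] [Finite P] (hP : IsPGroup p P)
    (hcyc : IsCyclic (P ⧸ etaUp p P 1)) (hnt : Nontrivial (P ⧸ etaUp p P 1)) : False := by
  classical
  set η : Subgroup P := etaUp p P 1 with hηdef
  have hη_eq : η = sSup {N : Subgroup P |
      N.Normal ∧ ⁅N, (⊤ : Subgroup P)⁆ ≤ pPow p N ⊔ etaUp p P 0} := rfl
  set K : Subgroup P := pPow p (⊤ : Subgroup P) with hKdef
  have hKnorm : K.Normal := pPow_normal p inferInstance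
  -- ⁅η, ⊤⁆ ≤ K
  have hηK : ⁅η, (⊤ : Subgroup P)⁆ ≤ K := by
    rw [hη_eq]
    refine commutator_sSup_le hKnorm fun N hN => le_trans hN.2 (sup_le ?_ ?_)
    · exact pPow_mono p le_top
    · show etaUp p P 0 ≤ K
      exact bot_le
  -- pick a lift of a generator of P ⧸ η
  obtain ⟨ζ, hζ⟩ := hcyc.exists_generator
  obtain ⟨x, rfl⟩ := QuotientGroup.mk_surjective ζ
  -- image of η in P ⧸ K is central
  have hcentral : ∀ h ∈ η, (QuotientGroup.mk h : P ⧸ K) ∈ Subgroup.center (P ⧸ K) := by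
    intro h hh
    rw [Subgroup.mem_center_iff]
    intro q
    obtain ⟨b, rfl⟩ := QuotientGroup.mk_surjective q
    have hK : ⁅h, b⁆ ∈ K := hηK (Subgroup.commutator_mem_commutator hh (Subgroup.mem_top b))
    have h1 : (QuotientGroup.mk ⁅h, b⁆ : P ⧸ K) = 1 := (QuotientGroup.eq_one_iff _).mpr hK
    have h2 : ⁅(QuotientGroup.mk h : P ⧸ K), (QuotientGroup.mk b : P ⧸ K)⁆ = 1 := by
      simpa [commutatorElement_def, QuotientGroup.mk_mul, QuotientGroup.mk_inv] using h1
    exact (commutatorElement_eq_one_iff_commute.mp h2).symm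
  -- every element of P ⧸ K decomposes as central * (mk x)^n
  have hdecomp : ∀ q : P ⧸ K, ∃ (c : P ⧸ K) (n : ℤ),
      c ∈ Subgroup.center (P ⧸ K) ∧ q = c * (QuotientGroup.mk x : P ⧸ K) ^ n := by
    intro q
    obtain ⟨g, rfl⟩ := QuotientGroup.mk_surjective q
    obtain ⟨n, hn⟩ := hζ (QuotientGroup.mk g : P ⧸ η)
    have hmem : g * x ^ (-n) ∈ η := by
      have h1 : (QuotientGroup.mk (g * x ^ (-n)) : P ⧸ η) = 1 := by
        rw [QuotientGroup.mk_mul, QuotientGroup.mk_zpow, zpow_neg]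
        simp only [] at hn
        rw [show ((QuotientGroup.mk x : P ⧸ η) ^ n) = QuotientGroup.mk g from hn, mul_inv_cancel]
      exact (QuotientGroup.eq_one_iff _).mp h1
    refine ⟨QuotientGroup.mk (g * x ^ (-n)), n, hcentral _ hmem, ?_⟩
    rw [QuotientGroup.mk_mul, QuotientGroup.mk_zpow, zpow_neg, mul_assoc,
      inv_mul_cancel, mul_one]
  -- P ⧸ K is abelian, hence ⁅⊤, ⊤⁆ ≤ K
  have htop : ⁅(⊤ : Subgroup P), (⊤ : Subgroup P)⁆ ≤ K := by
    refine Subgroup.commutator_le.mpr fun a _ b _ => ?_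
    have hcomm : Commute (QuotientGroup.mk a : P ⧸ K) (QuotientGroup.mk b) := by
      obtain ⟨c, n, hc, hcq⟩ := hdecomp (QuotientGroup.mk a)
      obtain ⟨d, m, hd, hdq⟩ := hdecomp (QuotientGroup.mk b)
      rw [hcq, hdq]
      set X : P ⧸ K := QuotientGroup.mk x
      have h1 : Commute (c * X ^ n) d := Subgroup.mem_center_iff.mp hd (c * X ^ n)
      have h2 : Commute (c * X ^ n) (X ^ m) := by
        refine Commute.mul_left ?_ ?_
        · exact (Subgroup.mem_center_iff.mp hc (X ^ m)).symm
        · exact (Commute.refl X).zpow_zpow n m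
      exact h1.mul_right h2
    have h1 : (QuotientGroup.mk ⁅a, b⁆ : P ⧸ K) = 1 := by
      have h2 := commutatorElement_eq_one_iff_commute.mpr hcomm
      simpa [commutatorElement_def, QuotientGroup.mk_mul, QuotientGroup.mk_inv] using h2
    exact (QuotientGroup.eq_one_iff _).mp h1
  -- hence ⊤ is in the defining set, so η = ⊤
  have hmem : (⊤ : Subgroup P) ∈ {N : Subgroup P |
      N.Normal ∧ ⁅N, (⊤ : Subgroup P)⁆ ≤ pPow p N ⊔ etaUp p P 0} :=
    ⟨inferInstance, le_trans htop le_sup_left⟩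
  have hηtop : η = ⊤ := le_antisymm le_top (hη_eq ▸ le_sSup hmem)
  obtain ⟨q, r, hqr⟩ := hnt
  obtain ⟨g₁, rfl⟩ := QuotientGroup.mk_surjective q
  obtain ⟨g₂, rfl⟩ := QuotientGroup.mk_surjective r
  exact hqr (QuotientGroup.eq.mpr (hηtop ▸ Subgroup.mem_top _))
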